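/- Let m ≥ n, let G ∈ ℝ^{m×n} be a nonzero matrix with full column rank (i.e., GᵀG invertible), and let λ > 0. Then the matrix ΔW* = −η · G(GᵀG)^{−1/2}, with step size η = (1/λ)·tr((GᵀG)^{1/2}) (one λ-th of the sum of the singular values of G), is a global minimizer over all ΔW ∈ ℝ^{m×n} of the functional F(ΔW) = ⟨G, ΔW⟩_F + (λ/2)·‖ΔW‖₂². That is, steepest descent under the spectral norm is achieved by the negatively scaled polar factor of the gradient. -/

import Mathlib

open Matrix
open scoped Matrix.Norms.L2Operator

/-- The spectral norm (`ℓ2 → ℓ2` operator norm) of a real matrix, i.e. its largest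
singular value.  This is Mathlib's scoped L2 operator norm on matrices. -/
noncomputable def matSpectralNorm {m n : ℕ} (M : Matrix (Fin m) (Fin n) ℝ) : ℝ := ‖M‖

open Classical in
/-- The unique symmetric positive semidefinite square root of a positive semidefinite
real matrix (junk value `0` if the input is not positive semidefinite). -/
noncomputable def matrixSqrt {n : ℕ} (A : Matrix (Fin n) (Fin n) ℝ) :
    Matrix (Fin n) (Fin n) ℝ :=
  if h : A.PosSemidef then h.1.cfc Real.sqrt else 0

/-- The polar factor `X (XᵀX)^{-1/2}` of a matrix `X` with full column rank. -/
noncomputable def polarFactor {m n : ℕ} (X : Matrix (Fin m) (Fin n) ℝ) :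
    Matrix (Fin m) (Fin n) ℝ :=
  X * (matrixSqrt (Xᵀ * X))⁻¹

/-- The Frobenius inner product `⟨A, B⟩_F = tr(Aᵀ B)`. -/
noncomputable def frobInner {m n : ℕ} (A B : Matrix (Fin m) (Fin n) ℝ) : ℝ :=
  (Aᵀ * B).trace

lemma real_transpose_of_posSemidef {n : ℕ} {S : Matrix (Fin n) (Fin n) ℝ}
    (hS : S.PosSemidef) : Sᵀ = S := by
  have h := hS.1
  rw [Matrix.IsHermitian] at h
  have h2 : Sᴴ = Sᵀ := by ext i j; simp [Matrix.conjTranspose_apply]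
  rw [← h2, h]

open scoped MatrixOrder in
lemma psd_cfc_sqrt {n : ℕ} {A : Matrix (Fin n) (Fin n) ℝ} (hA : A.PosSemidef) :
    (hA.1.cfc Real.sqrt).PosSemidef ∧ hA.1.cfc Real.sqrt * hA.1.cfc Real.sqrt = A := by
  have h0 : (0 : Matrix (Fin n) (Fin n) ℝ) ≤ A := hA.nonneg
  have : hA.1.cfc Real.sqrt = CFC.sqrt A := by
    rw [← hA.1.cfc_eq, CFC.sqrt_eq_real_sqrt A h0, cfcₙ_eq_cfc]
  rw [this]
  exact ⟨(CFC.sqrt_nonneg A).posSemidef, CFC.sqrt_mul_sqrt_self A h0⟩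

lemma dot_mulVec_ge {n : ℕ} (M : Matrix (Fin n) (Fin n) ℝ) (x : Fin n → ℝ) :
    -‖M‖ * (x ⬝ᵥ x) ≤ x ⬝ᵥ (M *ᵥ x) := by
  set x' : EuclideanSpace ℝ (Fin n) := (EuclideanSpace.equiv (Fin n) ℝ).symm x with hx'
  set y' : EuclideanSpace ℝ (Fin n) := (EuclideanSpace.equiv (Fin n) ℝ).symm (M *ᵥ x) with hy'
  have h1 : x ⬝ᵥ (M *ᵥ x) = inner ℝ x' y' := by
    simp [hx', hy', PiLp.inner_apply, dotProduct, mul_comm]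
  have h2 : x ⬝ᵥ x = ‖x'‖ ^ 2 := by
    rw [EuclideanSpace.norm_eq, Real.sq_sqrt (Finset.sum_nonneg fun i _ => sq_nonneg _)]
    simp [hx', dotProduct, pow_two]
  have h3 : ‖y'‖ ≤ ‖M‖ * ‖x'‖ := M.l2_opNorm_mulVec x'
  have h4 : |inner ℝ x' y'| ≤ ‖x'‖ * ‖y'‖ := abs_real_inner_le_norm x' y'
  have h5 : (0:ℝ) ≤ ‖x'‖ := norm_nonneg _
  rw [h1, h2]
  nlinarith [abs_le.mp h4]

/-- For `S` PSD: `tr(S M) ≥ -‖M‖ tr S`. -/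
lemma trace_mul_ge {n : ℕ} {S : Matrix (Fin n) (Fin n) ℝ} (hS : S.PosSemidef)
    (M : Matrix (Fin n) (Fin n) ℝ) : -‖M‖ * S.trace ≤ (S * M).trace := by
  set B := hS.1.cfc Real.sqrt with hB
  have hB2 : B * B = S := (psd_cfc_sqrt hS).2
  have hBsym : Bᵀ = B := real_transpose_of_posSemidef (psd_cfc_sqrt hS).1
  have hBsym' : ∀ i j, B j i = B i j := by
    intro i j; nth_rewrite 1 [← hBsym]; rfl
  have key : (S * M).trace = ∑ i, (fun j => B i j) ⬝ᵥ (M *ᵥ fun j => B i j) := by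
    rw [← hB2, ← Matrix.trace_mul_cycle]
    rw [Matrix.trace]
    apply Finset.sum_congr rfl
    intro i _
    simp only [Matrix.diag_apply, Matrix.mul_apply, dotProduct, Matrix.mulVec,
      Finset.mul_sum, Finset.sum_mul]
    rw [Finset.sum_comm]
    apply Finset.sum_congr rfl; intro j _
    apply Finset.sum_congr rfl; intro k _
    rw [hBsym' i k]; ring
  have keyS : S.trace = ∑ i, (fun j => B i j) ⬝ᵥ (fun j => B i j) := by
    rw [← hB2, Matrix.trace]
    apply Finset.sum_congr rfl
    intro i _
    simp only [Matrix.diag_apply, Matrix.mul_apply, dotProduct]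
    apply Finset.sum_congr rfl; intro j _
    rw [hBsym' j i]
  rw [key, keyS, Finset.mul_sum]
  exact Finset.sum_le_sum fun i _ => dot_mulVec_ge M _

set_option maxHeartbeats 1000000 in
/-- Steepest descent under the spectral norm is achieved by the negatively scaled
polar factor of the gradient: for `G ≠ 0` of full column rank and `λ > 0`, the matrix
`ΔW* = -η • polarFactor G` with `η = (1/λ) · tr((GᵀG)^{1/2})` globally minimizes
`ΔW ↦ ⟨G, ΔW⟩_F + (λ/2) ‖ΔW‖₂²`. -/
theorem stmt_0 {m n : ℕ} (hmn : n ≤ m) (G : Matrix (Fin m) (Fin n) ℝ)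
    (hG0 : G ≠ 0) (hG : IsUnit (Gᵀ * G)) (lam : ℝ) (hlam : 0 < lam) :
    let η : ℝ := (1 / lam) * (matrixSqrt (Gᵀ * G)).trace
    let Wstar : Matrix (Fin m) (Fin n) ℝ := (-η) • polarFactor G
    ∀ W : Matrix (Fin m) (Fin n) ℝ,
      frobInner G Wstar + lam / 2 * matSpectralNorm Wstar ^ 2 ≤
        frobInner G W + lam / 2 * matSpectralNorm W ^ 2 := by
  intro η Wstar W
  have hP : (Gᵀ * G).PosSemidef := by
    have := Matrix.posSemidef_conjTranspose_mul_self G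
    have hGH : Gᴴ = Gᵀ := by ext i j; simp [Matrix.conjTranspose_apply]
    rwa [hGH] at this
  set S : Matrix (Fin n) (Fin n) ℝ := matrixSqrt (Gᵀ * G) with hSdef
  have hSeq : S = hP.1.cfc Real.sqrt := by rw [hSdef, matrixSqrt, dif_pos hP]
  have hSP : S.PosSemidef := hSeq ▸ (psd_cfc_sqrt hP).1
  have hSS : S * S = Gᵀ * G := by rw [hSeq]; exact (psd_cfc_sqrt hP).2
  have hSsym : Sᵀ = S := real_transpose_of_posSemidef hSP
  -- S is invertible
  have hSu : IsUnit S.det := by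
    have h1 : IsUnit (Gᵀ * G).det := (Matrix.isUnit_iff_isUnit_det _).mp hG
    rw [← hSS, Matrix.det_mul] at h1
    exact isUnit_of_mul_isUnit_left h1
  have hSinv : S⁻¹ * S = 1 := Matrix.nonsing_inv_mul S hSu
  have hSinv' : S * S⁻¹ = 1 := Matrix.mul_nonsing_inv S hSu
  set O : Matrix (Fin m) (Fin n) ℝ := polarFactor G with hO
  have hOdef : O = G * S⁻¹ := rfl
  -- GᵀO = S
  have hGO : Gᵀ * O = S := by
    rw [hOdef, ← Matrix.mul_assoc, ← hSS, Matrix.mul_assoc, hSinv', Matrix.mul_one]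
  -- OᵀO = 1
  have hOT : Oᵀ = S⁻¹ * Gᵀ := by
    rw [hOdef, Matrix.transpose_mul, Matrix.transpose_nonsing_inv, hSsym]
  have hOO : Oᵀ * O = 1 := by
    rw [hOT, Matrix.mul_assoc, hGO, hSinv]
  -- ‖O‖ ≤ 1
  have hOH : Oᴴ = Oᵀ := by ext i j; simp [Matrix.conjTranspose_apply]
  have hnormO : ‖O‖ ≤ 1 := by
    have h1 : ‖Oᴴ * O‖ = ‖O‖ * ‖O‖ := Matrix.l2_opNorm_conjTranspose_mul_self O
    rw [hOH, hOO] at h1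
    have h2 : ‖(1 : Matrix (Fin n) (Fin n) ℝ)ᴴ * 1‖ = ‖(1 : Matrix (Fin n) (Fin n) ℝ)‖ * ‖(1 : Matrix (Fin n) (Fin n) ℝ)‖ :=
      Matrix.l2_opNorm_conjTranspose_mul_self 1
    simp only [Matrix.conjTranspose_one, Matrix.one_mul] at h2
    have h3 : (0:ℝ) ≤ ‖(1 : Matrix (Fin n) (Fin n) ℝ)‖ := norm_nonneg _
    have h4 : (0:ℝ) ≤ ‖O‖ := norm_nonneg _
    have h5 : ‖(1 : Matrix (Fin n) (Fin n) ℝ)‖ * (‖(1 : Matrix (Fin n) (Fin n) ℝ)‖ - 1) = 0 := by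
      linear_combination (-1 : ℝ) * h2
    rcases mul_eq_zero.mp h5 with h6 | h6
    · nlinarith
    · nlinarith
  -- trace S ≥ 0
  have htrS : 0 ≤ S.trace := by
    rw [Matrix.trace]
    apply Finset.sum_nonneg
    intro i _
    exact hSP.diag_nonneg
  have hη : 0 ≤ η := by
    have : η = (1/lam) * S.trace := rfl
    rw [this]; positivity
  -- value at Wstar
  have hfW : frobInner G Wstar = -η * S.trace := by
    show (Gᵀ * ((-η) • O)).trace = -η * S.trace
    rw [Matrix.mul_smul, Matrix.trace_smul, hGO, smul_eq_mul]
  have hnormW : matSpectralNorm Wstar ≤ η := by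
    show ‖(-η) • O‖ ≤ η
    rw [norm_smul, Real.norm_eq_abs, abs_neg, abs_of_nonneg hη]
    nlinarith [norm_nonneg O]
  -- lower bound for the objective at W
  have hlow : -‖W‖ * S.trace ≤ frobInner G W := by
    have hGW : Gᵀ * W = S * (Oᵀ * W) := by
      have hG' : Gᵀ = S * Oᵀ := by
        rw [hOT, ← Matrix.mul_assoc, hSinv', Matrix.one_mul]
      rw [hG', Matrix.mul_assoc]
    have h1 : -‖Oᵀ * W‖ * S.trace ≤ (S * (Oᵀ * W)).trace := trace_mul_ge hSP _
    have h2 : ‖Oᵀ * W‖ ≤ ‖W‖ := by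
      have h3 : ‖Oᵀ * W‖ ≤ ‖Oᵀ‖ * ‖W‖ := Matrix.l2_opNorm_mul _ _
      have h4 : ‖Oᵀ‖ = ‖O‖ := by rw [← hOH]; exact Matrix.l2_opNorm_conjTranspose O
      nlinarith [norm_nonneg W, norm_nonneg O]
    show -‖W‖ * S.trace ≤ (Gᵀ * W).trace
    rw [hGW]
    calc -‖W‖ * S.trace ≤ -‖Oᵀ * W‖ * S.trace :=
          mul_le_mul_of_nonneg_right (neg_le_neg h2) htrS
      _ ≤ (S * (Oᵀ * W)).trace := h1
  -- assemble
  have hηS : lam * η = S.trace := by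
    show lam * ((1/lam) * S.trace) = S.trace
    field_simp
  have hWsq : matSpectralNorm Wstar ^ 2 ≤ η ^ 2 := by
    have h0 : (0:ℝ) ≤ matSpectralNorm Wstar := norm_nonneg _
    nlinarith
  have hWnn : (0:ℝ) ≤ matSpectralNorm W := norm_nonneg _
  have hfsn : matSpectralNorm W = ‖W‖ := rfl
  calc frobInner G Wstar + lam / 2 * matSpectralNorm Wstar ^ 2
      ≤ -η * S.trace + lam / 2 * η ^ 2 := by
        rw [hfW]
        nlinarith [hWsq, hlam]
    _ ≤ frobInner G W + lam / 2 * matSpectralNorm W ^ 2 := by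
        rw [hfsn]
        nlinarith [hlow, hηS, sq_nonneg (‖W‖ - η), hlam, hWnn, htrS]
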